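/- Let n ≥ 1 and S = {1, …, n+1}, let e_1, …, e_n be the standard basis of ℝ^n, set e_{n+1} = −e_1 − ⋯ − e_n, and for nonempty I ⊆ S set e_I = Σ_{i ∈ I} e_i. Let P ⊂ ℝ^n be the convex hull of {e_I : ∅ ≠ I ⊊ S}. Then every e_I with ∅ ≠ I ⊊ S is a vertex (extreme point) of P; in particular P has exactly 2^{n+1} − 2 vertices. -/

import Mathlib

/-- For `S = {1, …, n+1}`: `eVec n i` is the `i`-th standard basis vector of `ℝ^n`
for `1 ≤ i ≤ n`, and `eVec n (n+1) = -e_1 - ⋯ - e_n`. -/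
def eVec (n : ℕ) (i : ℕ) : Fin n → ℝ :=
  fun j => if i = (j : ℕ) + 1 then 1 else if i = n + 1 then -1 else 0

/-- `eSet n I = ∑ i ∈ I, e_i`. -/
def eSet (n : ℕ) (I : Finset ℕ) : Fin n → ℝ := ∑ i ∈ I, eVec n i

lemma eSet_apply (n : ℕ) (I : Finset ℕ) (j : Fin n) :
    eSet n I j = (if (j:ℕ)+1 ∈ I then (1:ℝ) else 0) + (if n+1 ∈ I then (-1:ℝ) else 0) := by
  have hj : (j:ℕ) + 1 ≠ n + 1 := by have := j.isLt; omega
  unfold eSet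
  rw [Finset.sum_apply]
  have hterm : ∀ i ∈ I, eVec n i j
      = (if i = (j:ℕ)+1 then (1:ℝ) else 0) + (if i = n+1 then (-1:ℝ) else 0) := by
    intro i _
    unfold eVec
    by_cases h1 : i = (j:ℕ)+1
    · subst h1; simp [hj]; omega
    · have hjn : ¬ n = (j:ℕ) := by have := j.isLt; omega
      by_cases h2 : i = n+1 <;> simp [h1, h2, hjn]
  rw [Finset.sum_congr rfl hterm, Finset.sum_add_distrib,
    Finset.sum_ite_eq' I ((j:ℕ)+1) (fun _ => (1:ℝ)),
    Finset.sum_ite_eq' I (n+1) (fun _ => (-1:ℝ))]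

private lemma mismatch_aux (n : ℕ) {I J : Finset ℕ} (hI : I ⊂ Finset.Icc 1 (n+1))
    (hco : ∀ j : Fin n,
      (if (j:ℕ)+1 ∈ I then (1:ℝ) else 0) + (if n+1 ∈ I then (-1:ℝ) else 0)
      = (if (j:ℕ)+1 ∈ J then (1:ℝ) else 0) + (if n+1 ∈ J then (-1:ℝ) else 0))
    (hn1 : n+1 ∈ I) (hn2 : n+1 ∉ J) : False := by
  have hall : ∀ j : Fin n, (j:ℕ)+1 ∈ I := by
    intro j
    have := hco j
    simp only [hn1, hn2, if_true, if_false, if_pos, if_neg, not_false_iff] at this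
    split_ifs at this <;> first | assumption | norm_num at this
  apply hI.not_subset
  intro i hi
  rw [Finset.mem_Icc] at hi
  rcases eq_or_ne i (n+1) with rfl | hne
  · exact hn1
  · have hlt : i - 1 < n := by omega
    have := hall ⟨i - 1, hlt⟩
    simpa [Nat.sub_add_cancel hi.1] using this

lemma eSet_inj (n : ℕ) {I J : Finset ℕ} (hI : I ⊂ Finset.Icc 1 (n+1))
    (hJ : J ⊂ Finset.Icc 1 (n+1)) (h : eSet n I = eSet n J) : I = J := by
  have hco : ∀ j : Fin n,
      (if (j:ℕ)+1 ∈ I then (1:ℝ) else 0) + (if n+1 ∈ I then (-1:ℝ) else 0)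
      = (if (j:ℕ)+1 ∈ J then (1:ℝ) else 0) + (if n+1 ∈ J then (-1:ℝ) else 0) := by
    intro j; rw [← eSet_apply, ← eSet_apply, h]
  have hco' : ∀ j : Fin n,
      (if (j:ℕ)+1 ∈ J then (1:ℝ) else 0) + (if n+1 ∈ J then (-1:ℝ) else 0)
      = (if (j:ℕ)+1 ∈ I then (1:ℝ) else 0) + (if n+1 ∈ I then (-1:ℝ) else 0) :=
    fun j => (hco j).symm
  have hn12 : (n+1 ∈ I ↔ n+1 ∈ J) := by
    constructor
    · intro h1; by_contra h2; exact mismatch_aux n hI hco h1 h2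
    · intro h2; by_contra h1; exact mismatch_aux n hJ hco' h2 h1
  have hiff : ∀ j : Fin n, ((j:ℕ)+1 ∈ I ↔ (j:ℕ)+1 ∈ J) := by
    intro j
    have := hco j
    by_cases hn1 : n+1 ∈ I
    · have hn2 : n+1 ∈ J := hn12.mp hn1
      simp only [hn1, hn2, if_true] at this
      split_ifs at this <;> norm_num at this <;> tauto
    · have hn2 : n+1 ∉ J := fun h => hn1 (hn12.mpr h)
      simp only [hn1, hn2, if_false] at this
      split_ifs at this <;> norm_num at this <;> tauto
  ext i
  constructor <;> intro hi
  · have hiS := hI.subset hi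
    rw [Finset.mem_Icc] at hiS
    rcases eq_or_ne i (n+1) with rfl | hne
    · exact hn12.mp hi
    · have hlt : i - 1 < n := by omega
      have := (hiff ⟨i - 1, hlt⟩).mp (by simpa [Nat.sub_add_cancel hiS.1] using hi)
      simpa [Nat.sub_add_cancel hiS.1] using this
  · have hiS := hJ.subset hi
    rw [Finset.mem_Icc] at hiS
    rcases eq_or_ne i (n+1) with rfl | hne
    · exact hn12.mpr hi
    · have hlt : i - 1 < n := by omega
      have := (hiff ⟨i - 1, hlt⟩).mpr (by simpa [Nat.sub_add_cancel hiS.1] using hi)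
      simpa [Nat.sub_add_cancel hiS.1] using this

/-- weights: positive on `I`, negative off `I`, scaled so that the induced weight on
`n+1` (namely minus the sum over `1..n`) has the correct sign. -/
noncomputable def eB (n : ℕ) (I : Finset ℕ) : ℕ → ℝ :=
  fun i => if i ∈ I then (if n+1 ∈ I then 1 else (n+1:ℝ))
    else (if n+1 ∈ I then -(n+1:ℝ) else -1)

/-- the supporting linear functional for the vertex `e_I`. -/
noncomputable def eF (n : ℕ) (I : Finset ℕ) : (Fin n → ℝ) →ₗ[ℝ] ℝ :=
  ∑ j : Fin n, eB n I ((j:ℕ)+1) • (LinearMap.proj j)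

lemma eF_apply (n : ℕ) (I : Finset ℕ) (v : Fin n → ℝ) :
    eF n I v = ∑ j : Fin n, eB n I ((j:ℕ)+1) * v j := by
  simp [eF, LinearMap.sum_apply, LinearMap.smul_apply, LinearMap.proj_apply, smul_eq_mul]

lemma eF_eSet (n : ℕ) (I J : Finset ℕ) :
    eF n I (eSet n J) = (∑ j : Fin n, if (j:ℕ)+1 ∈ J then eB n I ((j:ℕ)+1) else 0)
      - (if n+1 ∈ J then (∑ j : Fin n, eB n I ((j:ℕ)+1)) else 0) := by
  rw [eF_apply]
  have hterm : ∀ j : Fin n, eB n I ((j:ℕ)+1) * eSet n J j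
      = (if (j:ℕ)+1 ∈ J then eB n I ((j:ℕ)+1) else 0)
        - (if n+1 ∈ J then eB n I ((j:ℕ)+1) else 0) := by
    intro j
    rw [eSet_apply]
    split_ifs <;> ring
  rw [Finset.sum_congr rfl (fun j _ => hterm j), Finset.sum_sub_distrib]
  by_cases h : n+1 ∈ J <;> simp [h]

lemma eT_sign (n : ℕ) {I : Finset ℕ} (hne : I.Nonempty) (hIs : I ⊂ Finset.Icc 1 (n+1)) :
    ((n+1 ∈ I) → (∑ j : Fin n, eB n I ((j:ℕ)+1)) < 0)
    ∧ ((n+1 ∉ I) → 0 < ∑ j : Fin n, eB n I ((j:ℕ)+1)) := by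
  classical
  set k := (Finset.univ.filter fun j : Fin n => (j:ℕ)+1 ∈ I).card with hk
  have hkn : k ≤ n := by
    calc k ≤ (Finset.univ : Finset (Fin n)).card := Finset.card_filter_le _ _
    _ = n := by simp
  have hsplit : ∀ a b : ℝ, ∑ j : Fin n, (if (j:ℕ)+1 ∈ I then a else b)
      = (k:ℝ) * a + ((n:ℝ) - k) * b := by
    intro a b
    rw [Finset.sum_ite, Finset.sum_const, Finset.sum_const]
    have hcards := Finset.card_filter_add_card_filter_not
      (s := (Finset.univ : Finset (Fin n))) (p := fun j : Fin n => (j:ℕ)+1 ∈ I)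
    simp only [Finset.card_univ, Fintype.card_fin] at hcards
    rw [nsmul_eq_mul, nsmul_eq_mul]
    have : ((Finset.univ.filter fun j : Fin n => ¬((j:ℕ)+1 ∈ I)).card : ℝ) = (n:ℝ) - k := by
      have : (Finset.univ.filter fun j : Fin n => ¬((j:ℕ)+1 ∈ I)).card = n - k := by omega
      rw [this]
      push_cast [Nat.cast_sub hkn]
      ring
    rw [this]
  constructor
  · intro hmem
    -- I proper & contains n+1 ⇒ some i ≤ n missing from I ⇒ k < n
    obtain ⟨i, hiS, hiI⟩ := Finset.exists_of_ssubset hIs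
    rw [Finset.mem_Icc] at hiS
    have hine : i ≠ n+1 := fun h => hiI (h ▸ hmem)
    have hlt : i - 1 < n := by omega
    have hj0 : (⟨i-1, hlt⟩ : Fin n) ∉ Finset.univ.filter fun j : Fin n => (j:ℕ)+1 ∈ I := by
      simp only [Finset.mem_filter, Finset.mem_univ, true_and]
      simpa [Nat.sub_add_cancel hiS.1] using hiI
    have hklt : k < n := by
      have : (Finset.univ.filter fun j : Fin n => (j:ℕ)+1 ∈ I) ⊂ Finset.univ := by
        refine Finset.ssubset_iff_subset_ne.2 ⟨Finset.filter_subset _ _, ?_⟩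
        intro h
        exact hj0 (Finset.eq_univ_iff_forall.mp h _)
      have := Finset.card_lt_card this
      simpa using this
    have hBs : ∀ j : Fin n, eB n I ((j:ℕ)+1) = if (j:ℕ)+1 ∈ I then (1:ℝ) else -(n+1:ℝ) := by
      intro j; simp [eB, hmem]
    rw [Finset.sum_congr rfl (fun j _ => hBs j), hsplit 1 (-(n+1:ℝ))]
    have hkr : (k:ℝ) + 1 ≤ (n:ℝ) := by exact_mod_cast hklt
    nlinarith [hkr]
  · intro hmem
    obtain ⟨i, hi⟩ := hne
    have hiS := hIs.subset hi
    rw [Finset.mem_Icc] at hiS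
    have hine : i ≠ n+1 := fun h => hmem (h ▸ hi)
    have hlt : i - 1 < n := by omega
    have hj0 : (⟨i-1, hlt⟩ : Fin n) ∈ Finset.univ.filter fun j : Fin n => (j:ℕ)+1 ∈ I := by
      simp only [Finset.mem_filter, Finset.mem_univ, true_and]
      simpa [Nat.sub_add_cancel hiS.1] using hi
    have hk1 : 1 ≤ k := Finset.card_pos.2 ⟨_, hj0⟩
    have hBs : ∀ j : Fin n, eB n I ((j:ℕ)+1) = if (j:ℕ)+1 ∈ I then ((n:ℝ)+1) else -1 := by
      intro j; simp [eB, hmem]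
    rw [Finset.sum_congr rfl (fun j _ => hBs j), hsplit ((n:ℝ)+1) (-1)]
    have hkr : (1:ℝ) ≤ (k:ℝ) := by exact_mod_cast hk1
    have hkr2 : (k:ℝ) ≤ (n:ℝ) := by exact_mod_cast hkn
    nlinarith [hkr, hkr2]

lemma eF_lt (n : ℕ) {I J : Finset ℕ} (hne : I.Nonempty) (hIs : I ⊂ Finset.Icc 1 (n+1))
    (hJs : J ⊆ Finset.Icc 1 (n+1)) (hJI : J ≠ I) :
    eF n I (eSet n J) < eF n I (eSet n I) := by
  classical
  rw [eF_eSet, eF_eSet]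
  set T := ∑ j : Fin n, eB n I ((j:ℕ)+1) with hT
  obtain ⟨hTneg, hTpos⟩ := eT_sign n hne hIs
  -- termwise comparison within the sums
  have hle : ∀ j : Fin n, (if (j:ℕ)+1 ∈ J then eB n I ((j:ℕ)+1) else 0)
      ≤ (if (j:ℕ)+1 ∈ I then eB n I ((j:ℕ)+1) else 0) := by
    intro j
    by_cases hI1 : (j:ℕ)+1 ∈ I
    · have hpos : 0 < eB n I ((j:ℕ)+1) := by
        simp only [eB, hI1, if_pos]
        split_ifs <;> positivity
      by_cases hJ1 : (j:ℕ)+1 ∈ J <;> simp [hI1, hJ1, le_of_lt hpos]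
    · have hneg : eB n I ((j:ℕ)+1) < 0 := by
        have hn0 : (0:ℝ) ≤ n := Nat.cast_nonneg n
        simp only [eB, hI1, if_neg, if_false]
        split_ifs <;> linarith
      by_cases hJ1 : (j:ℕ)+1 ∈ J <;> simp [hI1, hJ1, le_of_lt hneg]
  have hDle : (if n+1 ∈ I then T else 0) ≤ (if n+1 ∈ J then T else 0) := by
    by_cases h1 : n+1 ∈ I
    · by_cases h2 : n+1 ∈ J <;> simp [h1, h2, hT, le_of_lt (hTneg h1)]
    · by_cases h2 : n+1 ∈ J <;> simp [h1, h2, hT, le_of_lt (hTpos h1)]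
  -- there is an index where the two sets differ
  have hdiff : ∃ i, ¬ (i ∈ J ↔ i ∈ I) := by
    by_contra hc
    push_neg at hc
    exact hJI (Finset.ext fun i => (hc i))
  obtain ⟨i, hi⟩ := hdiff
  have hiS : i ∈ Finset.Icc 1 (n+1) := by
    by_cases h : i ∈ J
    · exact hJs h
    · have : i ∈ I := by tauto
      exact hIs.subset this
  rw [Finset.mem_Icc] at hiS
  rcases eq_or_ne i (n+1) with rfl | hine
  · -- strict on the `n+1` term
    have hDlt : (if n+1 ∈ I then T else 0) < (if n+1 ∈ J then T else 0) := by
      by_cases h1 : n+1 ∈ I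
      · have h2 : n+1 ∉ J := by tauto
        simpa [h1, h2] using hTneg h1
      · have h2 : n+1 ∈ J := by tauto
        simpa [h1, h2] using hTpos h1
    have hsum : (∑ j : Fin n, if (j:ℕ)+1 ∈ J then eB n I ((j:ℕ)+1) else 0)
        ≤ ∑ j : Fin n, if (j:ℕ)+1 ∈ I then eB n I ((j:ℕ)+1) else 0 :=
      Finset.sum_le_sum fun j _ => hle j
    linarith
  · -- strict inside the sum
    have hlt : i - 1 < n := by omega
    set j0 : Fin n := ⟨i - 1, hlt⟩ with hj0
    have hj0v : (j0:ℕ)+1 = i := by simp [hj0, Nat.sub_add_cancel hiS.1]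
    have hstrict : (if (j0:ℕ)+1 ∈ J then eB n I ((j0:ℕ)+1) else 0)
        < (if (j0:ℕ)+1 ∈ I then eB n I ((j0:ℕ)+1) else 0) := by
      rw [hj0v]
      by_cases hI1 : i ∈ I
      · have hJ1 : i ∉ J := by tauto
        have hpos : 0 < eB n I i := by
          simp only [eB, hI1, if_pos]
          split_ifs <;> positivity
        simpa [hI1, hJ1] using hpos
      · have hJ1 : i ∈ J := by tauto
        have hneg : eB n I i < 0 := by
          have hn0 : (0:ℝ) ≤ n := Nat.cast_nonneg n
          simp only [eB, hI1, if_neg, if_false]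
          split_ifs <;> linarith
        simpa [hI1, hJ1] using hneg
    have hsum : (∑ j : Fin n, if (j:ℕ)+1 ∈ J then eB n I ((j:ℕ)+1) else 0)
        < ∑ j : Fin n, if (j:ℕ)+1 ∈ I then eB n I ((j:ℕ)+1) else 0 :=
      Finset.sum_lt_sum (fun j _ => hle j) ⟨j0, Finset.mem_univ _, hstrict⟩
    linarith

def goodSets (n : ℕ) : Finset (Finset ℕ) :=
  (Finset.Icc 1 (n+1)).powerset.filter fun J => J.Nonempty ∧ J ≠ Finset.Icc 1 (n+1)

noncomputable def vertFinset (n : ℕ) : Finset (Fin n → ℝ) := (goodSets n).image (eSet n)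

lemma mem_goodSets {n : ℕ} {J : Finset ℕ} :
    J ∈ goodSets n ↔ J.Nonempty ∧ J ⊂ Finset.Icc 1 (n+1) := by
  simp only [goodSets, Finset.mem_filter, Finset.mem_powerset, Finset.ssubset_iff_subset_ne]
  tauto

lemma vset_eq (n : ℕ) :
    {v : Fin n → ℝ | ∃ J : Finset ℕ, J.Nonempty ∧ J ⊂ Finset.Icc 1 (n + 1) ∧ v = eSet n J}
      = ↑(vertFinset n) := by
  ext v
  simp only [Set.mem_setOf_eq, vertFinset, Finset.coe_image, Set.mem_image, Finset.mem_coe]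
  constructor
  · rintro ⟨J, h1, h2, rfl⟩
    exact ⟨J, mem_goodSets.2 ⟨h1, h2⟩, rfl⟩
  · rintro ⟨J, hJ, rfl⟩
    obtain ⟨h1, h2⟩ := mem_goodSets.1 hJ
    exact ⟨J, h1, h2, rfl⟩

lemma extreme_main (n : ℕ) {I : Finset ℕ} (hne : I.Nonempty)
    (hIs : I ⊂ Finset.Icc 1 (n+1)) :
    eSet n I ∈ Set.extremePoints ℝ (convexHull ℝ ↑(vertFinset n)) := by
  classical
  have hIm : eSet n I ∈ vertFinset n :=
    Finset.mem_image_of_mem _ (mem_goodSets.2 ⟨hne, hIs⟩)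
  have hmem : eSet n I ∈ convexHull ℝ ↑(vertFinset n) :=
    subset_convexHull ℝ _ hIm
  set m := eF n I (eSet n I) with hm
  -- all vertices are ≤ m, strictly unless equal to eSet n I
  have hvert_lt : ∀ y ∈ vertFinset n, y ≠ eSet n I → eF n I y < m := by
    intro y hy hyne
    obtain ⟨J, hJ, rfl⟩ := Finset.mem_image.1 hy
    obtain ⟨hJ1, hJ2⟩ := mem_goodSets.1 hJ
    have : J ≠ I := fun h => hyne (by rw [h])
    exact eF_lt n hne hIs hJ2.subset this
  have hvert_le : ∀ y ∈ vertFinset n, eF n I y ≤ m := by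
    intro y hy
    by_cases h : y = eSet n I
    · rw [h]
    · exact (hvert_lt y hy h).le
  have hbound : ∀ v ∈ convexHull ℝ (↑(vertFinset n) : Set (Fin n → ℝ)), eF n I v ≤ m := by
    intro v hv
    have hcv : Convex ℝ {v : Fin n → ℝ | eF n I v ≤ m} :=
      convex_halfSpace_le (LinearMap.isLinear _) m
    exact convexHull_min hvert_le hcv hv
  have hface : ∀ v ∈ convexHull ℝ (↑(vertFinset n) : Set (Fin n → ℝ)),
      eF n I v = m → v = eSet n I := by
    intro v hv hvm
    rw [Finset.mem_convexHull'] at hv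
    obtain ⟨w, hw0, hw1, hwv⟩ := hv
    have hFv : ∑ y ∈ vertFinset n, w y * eF n I y = m := by
      rw [← hvm, ← hwv, map_sum]
      exact Finset.sum_congr rfl fun y _ => by rw [map_smul, smul_eq_mul]
    have hzero : ∀ y ∈ vertFinset n, y ≠ eSet n I → w y = 0 := by
      intro y0 hy0 hy0ne
      by_contra hwy
      have hwy' : 0 < w y0 := lt_of_le_of_ne (hw0 y0 hy0) (Ne.symm hwy)
      have hlt : ∑ y ∈ vertFinset n, w y * eF n I y < ∑ y ∈ vertFinset n, w y * m := by
        refine Finset.sum_lt_sum (fun y hy => ?_) ⟨y0, hy0, ?_⟩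
        · exact mul_le_mul_of_nonneg_left (hvert_le y hy) (hw0 y hy)
        · exact mul_lt_mul_of_pos_left (hvert_lt y0 hy0 hy0ne) hwy'
      rw [← Finset.sum_mul, hw1, one_mul, hFv] at hlt
      exact lt_irrefl m hlt
    have hw1' : w (eSet n I) = 1 := by
      rw [← hw1]
      exact (Finset.sum_eq_single (eSet n I) (fun y hy hne' => hzero y hy hne')
        (fun h => absurd hIm h)).symm
    have : v = w (eSet n I) • eSet n I := by
      rw [← hwv]
      exact Finset.sum_eq_single (eSet n I)
        (fun y hy hne' => by rw [hzero y hy hne', zero_smul])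
        (fun h => absurd hIm h)
    rw [this, hw1', one_smul]
  rw [mem_extremePoints]
  refine ⟨hmem, fun x hx y hy hseg => ?_⟩
  obtain ⟨a, b, ha, hb, hab, hxy⟩ := hseg
  have hfx : eF n I x ≤ m := hbound x hx
  have hfy : eF n I y ≤ m := hbound y hy
  have hsum : a * eF n I x + b * eF n I y = m := by
    have h2 : eF n I (a • x + b • y) = m := by rw [hxy]
    rwa [map_add, map_smul, map_smul, smul_eq_mul, smul_eq_mul] at h2
  have hx' : eF n I x = m := by
    by_contra h
    have hlt : eF n I x < m := lt_of_le_of_ne hfx h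
    have habm : (a+b)*m = m := by rw [hab, one_mul]
    nlinarith [mul_lt_mul_of_pos_left hlt ha, mul_le_mul_of_nonneg_left hfy hb.le, habm]
  have hy' : eF n I y = m := by
    by_contra h
    have hlt : eF n I y < m := lt_of_le_of_ne hfy h
    have habm : (a+b)*m = m := by rw [hab, one_mul]
    nlinarith [mul_lt_mul_of_pos_left hlt hb, mul_le_mul_of_nonneg_left hfx ha.le, habm]
  exact ⟨hface x hx hx', hface y hy hy'⟩

lemma card_goodSets (n : ℕ) : (goodSets n).card = 2^(n+1) - 2 := by
  classical
  set S := Finset.Icc 1 (n+1) with hS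
  have hScard : S.card = n+1 := by simp [hS]
  have hSne : S.Nonempty := by
    rw [hS]
    exact Finset.nonempty_Icc.2 (by omega)
  have hsplit := Finset.card_filter_add_card_filter_not
    (s := S.powerset) (p := fun J => J.Nonempty ∧ J ≠ S)
  have hpow : S.powerset.card = 2^(n+1) := by
    rw [Finset.card_powerset, hScard]
  have hneg : (S.powerset.filter fun J => ¬(J.Nonempty ∧ J ≠ S)) = {∅, S} := by
    ext J
    simp only [Finset.mem_filter, Finset.mem_powerset, Finset.mem_insert,
      Finset.mem_singleton, not_and_or, not_ne_iff, Finset.not_nonempty_iff_eq_empty]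
    constructor
    · tauto
    · rintro (rfl | rfl)
      · exact ⟨Finset.empty_subset _, Or.inl rfl⟩
      · exact ⟨le_refl _, Or.inr rfl⟩
  have hcard2 : ({∅, S} : Finset (Finset ℕ)).card = 2 := by
    rw [Finset.card_insert_of_notMem, Finset.card_singleton]
    simp only [Finset.mem_singleton]
    exact fun h => hSne.ne_empty h.symm
  rw [hneg, hcard2] at hsplit
  have : (goodSets n).card + 2 = 2^(n+1) := by
    rw [goodSets, ← hS, hsplit, hpow]
  omega

lemma extremePoints_eq (n : ℕ) :
    Set.extremePoints ℝ (convexHull ℝ (↑(vertFinset n) : Set (Fin n → ℝ)))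
      = ↑(vertFinset n) := by
  apply Set.Subset.antisymm
  · exact extremePoints_convexHull_subset
  · intro v hv
    obtain ⟨J, hJ, rfl⟩ := Finset.mem_image.1 hv
    obtain ⟨h1, h2⟩ := mem_goodSets.1 hJ
    exact extreme_main n h1 h2

/-- Every `e_I`, for `I` a nonempty proper subset of `S = {1, …, n+1}`, is a vertex
(extreme point) of the polytope `P = conv{e_I : ∅ ≠ I ⊊ S}`; in particular `P` has
exactly `2^(n+1) - 2` vertices. -/
theorem stmt_11 (n : ℕ) (hn : 1 ≤ n) :
    (∀ I : Finset ℕ, I.Nonempty → I ⊂ Finset.Icc 1 (n + 1) →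
      eSet n I ∈ Set.extremePoints ℝ (convexHull ℝ
        {v : Fin n → ℝ | ∃ J : Finset ℕ, J.Nonempty ∧ J ⊂ Finset.Icc 1 (n + 1) ∧
          v = eSet n J})) ∧
    (Set.extremePoints ℝ (convexHull ℝ
        {v : Fin n → ℝ | ∃ J : Finset ℕ, J.Nonempty ∧ J ⊂ Finset.Icc 1 (n + 1) ∧
          v = eSet n J})).ncard = 2 ^ (n + 1) - 2 := by
  rw [vset_eq n]
  constructor
  · intro I h1 h2
    exact extreme_main n h1 h2
  · rw [extremePoints_eq n, Set.ncard_coe_finset]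
    rw [vertFinset, Finset.card_image_of_injOn, card_goodSets]
    intro I hI J hJ h
    exact eSet_inj n (mem_goodSets.1 (by simpa using hI)).2 (mem_goodSets.1 (by simpa using hJ)).2 h
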